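/- Let r ≥ 2, Φ : Fin r × Fin r → ℝ, and h : Fin r → ℝ with h_i ≥ 0 and ∑_i h_i = 1. Suppose that for every i ∈ {1,…,r} and every subset S ⊆ {1,…,r}\{i}, one has Φ_{ii} + (1/2)∑_{j∈S}(Φ_{ij} + Φ_{ji}) < 0. Then ∑_{i=1}^r ∑_{j=1}^r h_i h_j Φ_{ij} < 0. -/

import Mathlib

open Finset

theorem main_theorem_scalar {r : ℕ} (hr : 2 ≤ r) (Φ : Fin r × Fin r → ℝ)
    (h : Fin r → ℝ) (hpos : ∀ i, 0 ≤ h i) (hsum : ∑ i, h i = 1)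
    (hcond : ∀ i : Fin r, ∀ S : Finset (Fin r), i ∉ S →
      Φ (i, i) + (1 / 2) * ∑ j ∈ S, (Φ (i, j) + Φ (j, i)) < 0) :
    ∑ i : Fin r, ∑ j : Fin r, h i * h j * Φ (i, j) < 0 := by
  set Ψ : Fin r → Fin r → ℝ := fun i j => (Φ (i, j) + Φ (j, i)) / 2 with hΨ
  set P : Fin r → Fin r → ℝ := fun i j => max (Ψ i j) 0 with hP
  have hPsymm : ∀ i j, P i j = P j i := by
    intro i j; simp only [hP, hΨ]; ring_nf
  have hPnonneg : ∀ i j, 0 ≤ P i j := fun i j => le_max_right _ _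
  have hPge : ∀ i j, Ψ i j ≤ P i j := fun i j => le_max_left _ _
  -- Step 1: symmetrize
  have e1 : ∑ i : Fin r, ∑ j : Fin r, h i * h j * Φ (j, i)
      = ∑ i : Fin r, ∑ j : Fin r, h i * h j * Φ (i, j) := by
    rw [Finset.sum_comm]
    exact Finset.sum_congr rfl fun i _ => Finset.sum_congr rfl fun j _ => by ring
  have e2 : ∑ i : Fin r, ∑ j : Fin r, h i * h j * Φ (i, j)
      = ∑ i : Fin r, ∑ j : Fin r, h i * h j * Ψ i j := by
    symm
    calc ∑ i : Fin r, ∑ j : Fin r, h i * h j * Ψ i j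
        = ((∑ i : Fin r, ∑ j : Fin r, h i * h j * Φ (i, j))
            + ∑ i : Fin r, ∑ j : Fin r, h i * h j * Φ (j, i)) / 2 := by
          rw [← Finset.sum_add_distrib, Finset.sum_div]
          refine Finset.sum_congr rfl fun i _ => ?_
          rw [← Finset.sum_add_distrib, Finset.sum_div]
          refine Finset.sum_congr rfl fun j _ => ?_
          simp only [hΨ]; ring
      _ = ∑ i : Fin r, ∑ j : Fin r, h i * h j * Φ (i, j) := by rw [e1]; ring
  rw [e2]
  -- the key constants
  have hc : ∀ i : Fin r, Φ (i, i) + ∑ j ∈ univ.erase i, P i j < 0 := by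
    intro i
    have hS : i ∉ (univ.erase i).filter (fun j => 0 < Ψ i j) := by
      simp
    have := hcond i _ hS
    have heq : (1 / 2 : ℝ) * ∑ j ∈ (univ.erase i).filter (fun j => 0 < Ψ i j),
        (Φ (i, j) + Φ (j, i)) = ∑ j ∈ univ.erase i, P i j := by
      rw [Finset.mul_sum, Finset.sum_filter]
      refine Finset.sum_congr rfl fun j _ => ?_
      simp only [hP, hΨ]
      rcases le_or_gt (Φ (i, j) + Φ (j, i)) 0 with hle | hlt
      · rw [if_neg (by linarith), max_eq_right (by linarith)]
      · rw [if_pos (by linarith), max_eq_left (by linarith)]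
        ring
    rw [heq] at this
    exact this
  -- swap lemma
  have swap : ∀ g : Fin r → Fin r → ℝ,
      ∑ i : Fin r, ∑ j ∈ univ.erase i, g i j = ∑ j : Fin r, ∑ i ∈ univ.erase j, g i j := by
    have l : ∀ g : Fin r → Fin r → ℝ, ∑ i : Fin r, ∑ j ∈ univ.erase i, g i j
        = (∑ i : Fin r, ∑ j : Fin r, g i j) - ∑ i : Fin r, g i i := by
      intro g
      rw [← Finset.sum_sub_distrib]
      refine Finset.sum_congr rfl fun i _ => ?_
      rw [eq_sub_iff_add_eq, Finset.sum_erase_add _ _ (Finset.mem_univ i)]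
    intro g
    rw [l g, l fun a b => g b a, Finset.sum_comm]
  -- main bound
  have keyeq : ∑ i : Fin r, ∑ j ∈ univ.erase i, (h i ^ 2 + h j ^ 2) / 2 * P i j
      = ∑ i : Fin r, h i ^ 2 * ∑ j ∈ univ.erase i, P i j := by
    have hA : ∑ i : Fin r, ∑ j ∈ univ.erase i, h j ^ 2 / 2 * P i j
        = ∑ i : Fin r, ∑ j ∈ univ.erase i, h i ^ 2 / 2 * P i j := by
      rw [swap (fun i j => h j ^ 2 / 2 * P i j)]
      refine Finset.sum_congr rfl fun i _ => Finset.sum_congr rfl fun j _ => ?_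
      rw [hPsymm j i]
    have expand : ∀ i : Fin r, ∑ j ∈ univ.erase i, (h i ^ 2 + h j ^ 2) / 2 * P i j
        = (∑ j ∈ univ.erase i, h i ^ 2 / 2 * P i j) + ∑ j ∈ univ.erase i, h j ^ 2 / 2 * P i j := by
      intro i
      rw [← Finset.sum_add_distrib]
      refine Finset.sum_congr rfl fun j _ => by ring
    simp_rw [expand]
    rw [Finset.sum_add_distrib, hA, ← Finset.sum_add_distrib]
    refine Finset.sum_congr rfl fun i _ => ?_
    rw [← Finset.sum_add_distrib, Finset.mul_sum]
    refine Finset.sum_congr rfl fun j _ => by ring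
  have hbound : ∑ i : Fin r, ∑ j : Fin r, h i * h j * Ψ i j
      ≤ ∑ i : Fin r, h i ^ 2 * (Φ (i, i) + ∑ j ∈ univ.erase i, P i j) := by
    have split : ∀ i : Fin r, ∑ j : Fin r, h i * h j * Ψ i j
        = h i ^ 2 * Φ (i, i) + ∑ j ∈ univ.erase i, h i * h j * Ψ i j := by
      intro i
      rw [← Finset.sum_erase_add _ _ (Finset.mem_univ i)]
      have : h i * h i * Ψ i i = h i ^ 2 * Φ (i, i) := by
        simp only [hΨ]; ring
      rw [this]; ring
    simp_rw [split, mul_add, Finset.sum_add_distrib]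
    rw [← keyeq]
    refine add_le_add_right (Finset.sum_le_sum fun i _ =>
      Finset.sum_le_sum fun j _ => ?_) _
    have h1 : h i * h j * Ψ i j ≤ h i * h j * P i j :=
      mul_le_mul_of_nonneg_left (hPge i j) (mul_nonneg (hpos i) (hpos j))
    have h2 : h i * h j * P i j ≤ (h i ^ 2 + h j ^ 2) / 2 * P i j := by
      apply mul_le_mul_of_nonneg_right _ (hPnonneg i j)
      nlinarith [sq_nonneg (h i - h j)]
    linarith
  -- find an index with positive weight
  obtain ⟨i0, hi0⟩ : ∃ i : Fin r, 0 < h i := by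
    by_contra hc0
    push_neg at hc0
    have : ∀ i : Fin r, h i = 0 := fun i => le_antisymm (hc0 i) (hpos i)
    simp [this] at hsum
  have hfinal : ∑ i : Fin r, h i ^ 2 * (Φ (i, i) + ∑ j ∈ univ.erase i, P i j) < 0 := by
    have := Finset.sum_lt_sum (s := (univ : Finset (Fin r)))
      (f := fun i => h i ^ 2 * (Φ (i, i) + ∑ j ∈ univ.erase i, P i j))
      (g := fun _ => (0 : ℝ))
      (fun i _ => mul_nonpos_of_nonneg_of_nonpos (sq_nonneg _) (le_of_lt (hc i)))
      ⟨i0, Finset.mem_univ i0, mul_neg_of_pos_of_neg (by positivity) (hc i0)⟩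
    simpa using this
  linarith
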